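/- Let π be a permutation of {0,…,n−1} and let M ∈ {0,…,n−1} be a pivot rank. Let ℓ = M + 1, let L be the list of positions i with π(i) ≤ M in increasing order and R the list of positions with π(i) > M in increasing order, and let π' be the stably partitioned permutation: π'(j) = π(L_j) for j < ℓ and π'(j) = π(R_{j−ℓ}) for j ≥ ℓ. If S is a sorted subsequence of π, then the set of new positions (under the stable partition) of S ∩ {i : π(i) ≤ M} is a sorted subsequence of π' contained in the first ℓ positions, and the set of new positions of S ∩ {i : π(i) > M} is a sorted subsequence of π' contained in the last n − ℓ positions. -/

import Mathlib

/-- `S` is a sorted subsequence of the permutation `π` of `{0,…,n-1}`: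
`S` is a nonempty set of positions, `π` is strictly increasing on `S`, and the
image `π(S)` is a set of consecutive integers. -/
def SortedSubseq {n : ℕ} (π : Equiv.Perm (Fin n)) (S : Finset (Fin n)) : Prop :=
  S.Nonempty ∧ StrictMonoOn (⇑π) ↑S ∧
    ∀ x ∈ S, ∀ y ∈ S, ∀ z : Fin n, π x ≤ z → z ≤ π y → ∃ w ∈ S, π w = z

/-- The listing of positions after stably partitioning `π` around the pivot
rank `M`: first the positions `i` with `π i ≤ M` in increasing order, then the
positions with `M < π i` in increasing order. -/
def stableList {n : ℕ} (π : Equiv.Perm (Fin n)) (M : Fin n) : List (Fin n) :=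
  ((Finset.univ.filter (fun i : Fin n => π i ≤ M)).sort (· ≤ ·)) ++
    ((Finset.univ.filter (fun i : Fin n => M < π i)).sort (· ≤ ·))

/-- Stable partitioning around a pivot rank `M` preserves sorted subsequences:
if `τ j` is the old position stored at new position `j` (so that the stably
partitioned permutation is `π' = π ∘ τ`, and the new position of an old
position `i` is `τ⁻¹ i`), then the new positions of `S ∩ {i : π i ≤ M}` form a
sorted subsequence of `π'` contained in the first `ℓ = M + 1` positions, and
the new positions of `S ∩ {i : M < π i}` form a sorted subsequence of `π'`
contained in the last `n - ℓ` positions. -/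
theorem stablePartition_sortedSubseq {n : ℕ} (π : Equiv.Perm (Fin n)) (M : Fin n)
    (τ π' : Equiv.Perm (Fin n))
    (hτ : ∀ j : Fin n, τ j = (stableList π M).getD j.val M)
    (hπ' : ∀ j : Fin n, π' j = π (τ j))
    (S : Finset (Fin n)) (hS : SortedSubseq π S) :
    ((S.filter (fun i => π i ≤ M)).Nonempty →
      SortedSubseq π' ((S.filter (fun i => π i ≤ M)).image τ.symm) ∧
        ∀ j ∈ (S.filter (fun i => π i ≤ M)).image τ.symm, j.val < M.val + 1) ∧
    ((S.filter (fun i => M < π i)).Nonempty →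
      SortedSubseq π' ((S.filter (fun i => M < π i)).image τ.symm) ∧
        ∀ j ∈ (S.filter (fun i => M < π i)).image τ.symm, M.val + 1 ≤ j.val) := by
  classical
  set A : Finset (Fin n) := Finset.univ.filter (fun i : Fin n => π i ≤ M) with hAdef
  set B : Finset (Fin n) := Finset.univ.filter (fun i : Fin n => M < π i) with hBdef
  set LA : List (Fin n) := A.sort (· ≤ ·) with hLAdef
  set LB : List (Fin n) := B.sort (· ≤ ·) with hLBdef
  have hstable : stableList π M = LA ++ LB := rfl
  set ℓ : ℕ := M.val + 1 with hldef
  -- cardinality of A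
  have hAcard : A.card = ℓ := by
    have : A = (Finset.Iic M).map π.symm.toEmbedding := by
      ext i
      simp only [hAdef, Finset.mem_filter, Finset.mem_univ, true_and, Finset.mem_map,
        Finset.mem_Iic, Equiv.coe_toEmbedding]
      constructor
      · intro h; exact ⟨π i, h, π.symm_apply_apply i⟩
      · rintro ⟨j, hj, rfl⟩; simpa using hj
    rw [this, Finset.card_map, Fin.card_Iic]
  have hLAlen : LA.length = ℓ := by rw [hLAdef, Finset.length_sort, hAcard]
  have hBcard : B.card = n - ℓ := by
    have hdisj : Disjoint A B := by
      rw [Finset.disjoint_left]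
      intro a ha hb
      simp only [hAdef, hBdef, Finset.mem_filter] at ha hb
      exact absurd ha.2 (not_le.mpr hb.2)
    have hunion : A ∪ B = Finset.univ := by
      ext i
      simp only [hAdef, hBdef, Finset.mem_union, Finset.mem_filter, Finset.mem_univ, true_and,
        iff_true]
      exact le_or_gt (π i) M
    have := Finset.card_union_of_disjoint hdisj
    rw [hunion, Finset.card_univ, Fintype.card_fin, hAcard] at this
    omega
  have hLBlen : LB.length = n - ℓ := by rw [hLBdef, Finset.length_sort, hBcard]
  have hlen : (LA ++ LB).length = n := by
    rw [List.length_append, hLAlen, hLBlen]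
    have := M.isLt; omega
  -- membership of τ j
  have hτA : ∀ j : Fin n, j.val < ℓ → τ j ∈ A := by
    intro j hj
    rw [hτ j, hstable, List.getD_append _ _ _ _ (hLAlen ▸ hj),
      List.getD_eq_getElem _ _ (hLAlen ▸ hj)]
    rw [← Finset.mem_sort (α := Fin n) (· ≤ ·)]
    exact List.getElem_mem _
  have hτB : ∀ j : Fin n, ℓ ≤ j.val → τ j ∈ B := by
    intro j hj
    have hjlt : j.val - LA.length < LB.length := by
      rw [hLAlen, hLBlen]; have := j.isLt; omega
    rw [hτ j, hstable, List.getD_append_right _ _ _ _ (hLAlen ▸ hj),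
      List.getD_eq_getElem _ _ hjlt]
    rw [← Finset.mem_sort (α := Fin n) (· ≤ ·)]
    exact List.getElem_mem _
  have hAnotB : ∀ i, i ∈ A → i ∉ B := by
    intro i hi hib
    simp only [hAdef, hBdef, Finset.mem_filter] at hi hib
    exact absurd hi.2 (not_le.mpr hib.2)
  -- symm positions
  have hsymmA : ∀ i, i ∈ A → (τ.symm i).val < ℓ := by
    intro i hi
    by_contra h
    have := hτB (τ.symm i) (not_lt.mp h)
    rw [Equiv.apply_symm_apply] at this
    exact hAnotB i hi this
  have hsymmB : ∀ i, i ∈ B → ℓ ≤ (τ.symm i).val := by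
    intro i hi
    by_contra h
    have := hτA (τ.symm i) (not_le.mp h)
    rw [Equiv.apply_symm_apply] at this
    exact hAnotB _ this hi
  -- strict monotonicity within blocks
  have hsortA : LA.Pairwise (· < ·) := (Finset.sortedLT_sort A).pairwise
  have hsortB : LB.Pairwise (· < ·) := (Finset.sortedLT_sort B).pairwise
  have hmonoA : ∀ j j' : Fin n, j'.val < ℓ → j < j' → τ j < τ j' := by
    intro j j' hj' hjj'
    have hj : j.val < ℓ := lt_trans hjj' hj'
    rw [hτ j, hτ j', hstable, List.getD_append _ _ _ _ (hLAlen ▸ hj),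
      List.getD_append _ _ _ _ (hLAlen ▸ hj'),
      List.getD_eq_getElem _ _ (hLAlen ▸ hj), List.getD_eq_getElem _ _ (hLAlen ▸ hj')]
    exact List.pairwise_iff_getElem.mp hsortA _ _ _ _ hjj'
  have hmonoB : ∀ j j' : Fin n, ℓ ≤ j.val → j < j' → τ j < τ j' := by
    intro j j' hj hjj'
    have hj' : ℓ ≤ j'.val := le_trans hj (le_of_lt hjj')
    have h1 : j.val - LA.length < LB.length := by
      rw [hLAlen, hLBlen]; have := j.isLt; omega
    have h2 : j'.val - LA.length < LB.length := by
      rw [hLAlen, hLBlen]; have := j'.isLt; omega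
    rw [hτ j, hτ j', hstable, List.getD_append_right _ _ _ _ (hLAlen ▸ hj),
      List.getD_append_right _ _ _ _ (hLAlen ▸ hj'),
      List.getD_eq_getElem _ _ h1, List.getD_eq_getElem _ _ h2]
    apply List.pairwise_iff_getElem.mp hsortB
    rw [hLAlen]
    omega
  obtain ⟨-, hmono, hcons⟩ := hS
  constructor
  · -- first block
    intro hne
    have hboundA : ∀ j ∈ (S.filter (fun i => π i ≤ M)).image τ.symm, j.val < ℓ := by
      intro j hj
      obtain ⟨i, hi, rfl⟩ := Finset.mem_image.mp hj
      rw [Finset.mem_filter] at hi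
      exact hsymmA i (by simp [hAdef, hi.2])
    have hmemS : ∀ j ∈ (S.filter (fun i => π i ≤ M)).image τ.symm,
        τ j ∈ S ∧ π (τ j) ≤ M := by
      intro j hj
      obtain ⟨i, hi, rfl⟩ := Finset.mem_image.mp hj
      rw [Finset.mem_filter] at hi
      rw [Equiv.apply_symm_apply]
      exact ⟨hi.1, hi.2⟩
    refine ⟨⟨hne.image _, ?_, ?_⟩, hboundA⟩
    · intro x hx y hy hxy
      rw [hπ' x, hπ' y]
      exact hmono (hmemS x hx).1 (hmemS y hy).1
        (hmonoA x y (hboundA y hy) hxy)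
    · intro x hx y hy z hz1 hz2
      rw [hπ' x] at hz1; rw [hπ' y] at hz2
      obtain ⟨w, hw, hwz⟩ := hcons _ (hmemS x hx).1 _ (hmemS y hy).1 z hz1 hz2
      have hwM : π w ≤ M := hwz ▸ le_trans hz2 (hmemS y hy).2
      refine ⟨τ.symm w, Finset.mem_image.mpr ⟨w, Finset.mem_filter.mpr ⟨hw, hwM⟩, rfl⟩, ?_⟩
      rw [hπ', Equiv.apply_symm_apply, hwz]
  · -- second block
    intro hne
    have hboundB : ∀ j ∈ (S.filter (fun i => M < π i)).image τ.symm, ℓ ≤ j.val := by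
      intro j hj
      obtain ⟨i, hi, rfl⟩ := Finset.mem_image.mp hj
      rw [Finset.mem_filter] at hi
      exact hsymmB i (by simp [hBdef, hi.2])
    have hmemS : ∀ j ∈ (S.filter (fun i => M < π i)).image τ.symm,
        τ j ∈ S ∧ M < π (τ j) := by
      intro j hj
      obtain ⟨i, hi, rfl⟩ := Finset.mem_image.mp hj
      rw [Finset.mem_filter] at hi
      rw [Equiv.apply_symm_apply]
      exact ⟨hi.1, hi.2⟩
    refine ⟨⟨hne.image _, ?_, ?_⟩, hboundB⟩
    · intro x hx y hy hxy
      rw [hπ' x, hπ' y]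
      exact hmono (hmemS x hx).1 (hmemS y hy).1
        (hmonoB x y (hboundB x hx) hxy)
    · intro x hx y hy z hz1 hz2
      rw [hπ' x] at hz1; rw [hπ' y] at hz2
      obtain ⟨w, hw, hwz⟩ := hcons _ (hmemS x hx).1 _ (hmemS y hy).1 z hz1 hz2
      have hwM : M < π w := hwz ▸ lt_of_lt_of_le (hmemS x hx).2 hz1
      refine ⟨τ.symm w, Finset.mem_image.mpr ⟨w, Finset.mem_filter.mpr ⟨hw, hwM⟩, rfl⟩, ?_⟩
      rw [hπ', Equiv.apply_symm_apply, hwz]
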